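/- Let π ∈ S_n satisfy π(j) = j for all j > r+1 (where 1 ≤ r < n) and π(r+1) ≠ 1, and let t_r be the cycle (r+1, r, ..., 2, 1). Then maj(t_r ∘ π) = maj(π) + 1. -/

import Mathlib

namespace SymMaj

/-- `sP i` is the adjacent transposition `s_i = (i, i+1)` (1-indexed),
i.e. the swap of the 0-indexed positions `i-1` and `i`; junk value `1` outside range. -/
def sP {n : ℕ} (i : ℕ) : Equiv.Perm (Fin n) :=
  if h : 0 < i ∧ i < n then Equiv.swap ⟨i - 1, by omega⟩ ⟨i, h.2⟩ else 1

/-- `tP i = s_i * s_{i-1} * ⋯ * s_1`; in particular `tP 0 = 1`. -/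
def tP {n : ℕ} (i : ℕ) : Equiv.Perm (Fin n) :=
  ((List.range i).map (fun j => (sP (i - j) : Equiv.Perm (Fin n)))).prod

/-- `repP k = tP (n-1) ^ k (n-1) * ⋯ * tP 1 ^ k 1 * tP 0 ^ k 0`. -/
def repP {n : ℕ} (k : Fin n → ℕ) : Equiv.Perm (Fin n) :=
  (List.ofFn (fun i : Fin n => (tP (i : ℕ) : Equiv.Perm (Fin n)) ^ k i)).reverse.prod

/-- The major index: sum of all 1-indexed `i`, `1 ≤ i < n`, with `π(i) > π(i+1)`. -/
def majP {n : ℕ} (π : Equiv.Perm (Fin n)) : ℕ :=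
  ∑ i ∈ Finset.range n, if h : i + 1 < n then
    (if π ⟨i + 1, h⟩ < π ⟨i, by omega⟩ then i + 1 else 0) else 0


lemma tP_succ {n : ℕ} (r : ℕ) : (tP (r+1) : Equiv.Perm (Fin n)) = sP (r+1) * tP r := by
  unfold tP
  rw [List.range_succ_eq_map, List.map_cons, List.map_map, List.prod_cons]
  have h2 : ((fun j => (sP (r + 1 - j) : Equiv.Perm (Fin n))) ∘ Nat.succ) = fun j => (sP (r - j) : Equiv.Perm (Fin n)) := by
    funext j
    simp [Function.comp, Nat.succ_sub_succ_eq_sub]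
  rw [h2]
  simp

lemma tP_apply {n : ℕ} (r : ℕ) (hrn : r < n) (x : Fin n) :
    (((tP r : Equiv.Perm (Fin n)) x : Fin n) : ℕ) =
      if (x:ℕ) = 0 then r else if (x:ℕ) ≤ r then (x:ℕ) - 1 else (x:ℕ) := by
  induction r with
  | zero =>
    have h1 : (tP 0 : Equiv.Perm (Fin n)) = 1 := by simp [tP]
    rw [h1]
    simp only [Equiv.Perm.one_apply]
    split_ifs <;> omega
  | succ r ih =>
    have hr : r < n := by omega
    rw [tP_succ, Equiv.Perm.mul_apply]
    have hs : (sP (r+1) : Equiv.Perm (Fin n)) = Equiv.swap ⟨r, hr⟩ ⟨r+1, hrn⟩ := by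
      unfold sP
      rw [dif_pos ⟨Nat.succ_pos r, hrn⟩]
      congr 1
    rw [hs, Equiv.swap_apply_def]
    have hy := ih hr
    have hxn : (x:ℕ) < n := x.isLt
    by_cases hx0 : (x:ℕ) = 0
    · have hyv : (((tP r : Equiv.Perm (Fin n)) x : Fin n):ℕ) = r := by rw [hy, if_pos hx0]
      rw [if_pos (Fin.ext hyv), if_pos hx0]
    · by_cases hxr : (x:ℕ) ≤ r
      · have hyv : (((tP r : Equiv.Perm (Fin n)) x : Fin n):ℕ) = (x:ℕ) - 1 := by
          rw [hy, if_neg hx0, if_pos hxr]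
        have h1 : (tP r : Equiv.Perm (Fin n)) x ≠ ⟨r, hr⟩ := by
          intro h; rw [Fin.ext_iff] at h; simp at h; omega
        have h2 : (tP r : Equiv.Perm (Fin n)) x ≠ ⟨r+1, hrn⟩ := by
          intro h; rw [Fin.ext_iff] at h; simp at h; omega
        rw [if_neg h1, if_neg h2, if_neg hx0, if_pos (by omega : (x:ℕ) ≤ r+1)]
        exact hyv
      · by_cases hxr1 : (x:ℕ) = r + 1
        · have hyv : (((tP r : Equiv.Perm (Fin n)) x : Fin n):ℕ) = r + 1 := by
            rw [hy, if_neg hx0, if_neg hxr]; exact hxr1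
          have h1 : (tP r : Equiv.Perm (Fin n)) x ≠ ⟨r, hr⟩ := by
            intro h; rw [Fin.ext_iff] at h; simp at h; omega
          have h2 : (tP r : Equiv.Perm (Fin n)) x = ⟨r+1, hrn⟩ := Fin.ext (by simpa using hyv)
          rw [if_neg h1, if_pos h2, if_neg hx0, if_pos (by omega : (x:ℕ) ≤ r+1)]
          simp [hxr1]
        · have hyv : (((tP r : Equiv.Perm (Fin n)) x : Fin n):ℕ) = (x:ℕ) := by
            rw [hy, if_neg hx0, if_neg hxr]
          have h1 : (tP r : Equiv.Perm (Fin n)) x ≠ ⟨r, hr⟩ := by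
            intro h; rw [Fin.ext_iff] at h; simp at h; omega
          have h2 : (tP r : Equiv.Perm (Fin n)) x ≠ ⟨r+1, hrn⟩ := by
            intro h; rw [Fin.ext_iff] at h; simp at h; omega
          rw [if_neg h1, if_neg h2, if_neg hx0, if_neg (by omega : ¬ (x:ℕ) ≤ r+1)]
          exact hyv

/-- if `π(j) = j` for all (1-indexed) `j > r+1` and `π(r+1) ≠ 1`,
then `maj(t_r ∘ π) = maj(π) + 1`. -/
theorem majP_cycle_mul (n r : ℕ) (hr : 1 ≤ r) (hrn : r < n) (π : Equiv.Perm (Fin n))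
    (hfix : ∀ j : Fin n, r + 1 ≤ (j : ℕ) → π j = j)
    (hne : π ⟨r, hrn⟩ ≠ ⟨0, by omega⟩) :
    majP (tP r * π) = majP π + 1 := by
  have hn0 : 0 < n := by omega
  set σ := tP r * π with hσdef
  set P : Fin n := π⁻¹ ⟨0, hn0⟩ with hPdef
  set p := (P : ℕ) with hpdef
  have hπP : π P = ⟨0, hn0⟩ := Equiv.apply_symm_apply π _
  have hπ0 : ∀ x : Fin n, ((π x : Fin n) : ℕ) = 0 ↔ (x:ℕ) = p := by
    intro x
    constructor
    · intro h
      have h1 : π x = ⟨0, hn0⟩ := Fin.ext h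
      rw [← hπP] at h1
      have := π.injective h1
      rw [this]
    · intro h
      have h1 : x = P := Fin.ext h
      rw [h1, hπP]
  have hπle : ∀ x : Fin n, (x:ℕ) ≤ r → ((π x : Fin n):ℕ) ≤ r := by
    intro x hx
    by_contra hcon
    push_neg at hcon
    have h1 : π (π x) = π x := hfix (π x) (by omega)
    have h2 := π.injective h1
    have h3 : ((π x : Fin n):ℕ) = (x:ℕ) := by rw [h2]
    omega
  have hpr : p < r := by
    have h1 : p ≤ r := by
      by_contra hc
      push_neg at hc
      have h2 := hfix P (by omega)
      rw [hπP] at h2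
      have h3 : p = 0 := by rw [hpdef, ← h2]
      omega
    have h2 : p ≠ r := by
      intro h
      apply hne
      have h3 : (⟨r, hrn⟩ : Fin n) = P := Fin.ext (by simp [← h]; exact hpdef)
      rw [h3, hπP]
    omega
  have hmaj : ∀ ρ : Equiv.Perm (Fin n), majP ρ = ∑ i ∈ Finset.range n,
      (if h : i + 1 < n then
        (if ρ ⟨i+1, h⟩ < ρ ⟨i, Nat.lt_of_succ_lt h⟩ then i+1 else 0) else 0) :=
    fun ρ => rfl
  have key : ∀ i ∈ Finset.range n,
      ((if h : i + 1 < n then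
        (if σ ⟨i+1, h⟩ < σ ⟨i, Nat.lt_of_succ_lt h⟩ then i+1 else 0) else 0)
        + (if i + 1 = p then p else 0))
      = ((if h : i + 1 < n then
        (if π ⟨i+1, h⟩ < π ⟨i, Nat.lt_of_succ_lt h⟩ then i+1 else 0) else 0)
        + (if i = p then p + 1 else 0)) := by
    intro i hi
    rw [Finset.mem_range] at hi
    by_cases h1 : i + 1 < n
    · rw [dif_pos h1, dif_pos h1]
      have hσa : ((σ ⟨i, Nat.lt_of_succ_lt h1⟩ : Fin n):ℕ) =
          if ((π ⟨i, Nat.lt_of_succ_lt h1⟩ : Fin n):ℕ) = 0 then r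
          else if ((π ⟨i, Nat.lt_of_succ_lt h1⟩ : Fin n):ℕ) ≤ r
            then ((π ⟨i, Nat.lt_of_succ_lt h1⟩ : Fin n):ℕ) - 1
            else ((π ⟨i, Nat.lt_of_succ_lt h1⟩ : Fin n):ℕ) := by
        rw [hσdef, Equiv.Perm.mul_apply]
        exact tP_apply r hrn _
      have hσb : ((σ ⟨i+1, h1⟩ : Fin n):ℕ) =
          if ((π ⟨i+1, h1⟩ : Fin n):ℕ) = 0 then r
          else if ((π ⟨i+1, h1⟩ : Fin n):ℕ) ≤ r
            then ((π ⟨i+1, h1⟩ : Fin n):ℕ) - 1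
            else ((π ⟨i+1, h1⟩ : Fin n):ℕ) := by
        rw [hσdef, Equiv.Perm.mul_apply]
        exact tP_apply r hrn _
      set a := ((π ⟨i, Nat.lt_of_succ_lt h1⟩ : Fin n):ℕ) with hadef
      set b := ((π ⟨i+1, h1⟩ : Fin n):ℕ) with hbdef
      have hab : a ≠ b := by
        intro h
        have h2 : (⟨i, Nat.lt_of_succ_lt h1⟩ : Fin n) = ⟨i+1, h1⟩ :=
          π.injective (Fin.ext h)
        rw [Fin.mk.injEq] at h2
        omega
      have ha0 : a = 0 ↔ i = p := by simpa using hπ0 ⟨i, Nat.lt_of_succ_lt h1⟩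
      have hb0 : b = 0 ↔ i + 1 = p := by simpa using hπ0 ⟨i+1, h1⟩
      have haR : i ≤ r → a ≤ r := fun h => hπle ⟨i, Nat.lt_of_succ_lt h1⟩ h
      have hbR : i + 1 ≤ r → b ≤ r := fun h => hπle ⟨i+1, h1⟩ h
      have haI : r < i → a = i := by
        intro h
        have h2 := hfix ⟨i, Nat.lt_of_succ_lt h1⟩ (by simp; omega)
        rw [hadef, h2]
      have hbI : r < i + 1 → b = i + 1 := by
        intro h
        have h2 := hfix ⟨i+1, h1⟩ (by simp; omega)
        rw [hbdef, h2]
      simp only [Fin.lt_def, hσa, hσb]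
      split_ifs <;> omega
    · rw [dif_neg h1, dif_neg h1]
      split_ifs <;> omega
  have hsum_f : ∑ i ∈ Finset.range n, (if i = p then p + 1 else 0) = p + 1 := by
    rw [Finset.sum_ite_eq' (Finset.range n) p (fun _ => p + 1)]
    rw [if_pos (Finset.mem_range.mpr (by omega))]
  have hsum_g : ∑ i ∈ Finset.range n, (if i + 1 = p then p else 0) = p := by
    rcases Nat.eq_zero_or_pos p with hp0 | hp0
    · simp [hp0]
    · have h2 : ∀ i, (if i + 1 = p then p else 0) = (if i = p - 1 then p else 0) := by
        intro i; split_ifs <;> omega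
      simp only [h2]
      rw [Finset.sum_ite_eq' (Finset.range n) (p-1) (fun _ => p)]
      rw [if_pos (Finset.mem_range.mpr (by omega))]
  have hfinal : majP σ + p = majP π + (p + 1) := by
    have h : (∑ i ∈ Finset.range n, (if h : i + 1 < n then
          (if σ ⟨i+1, h⟩ < σ ⟨i, Nat.lt_of_succ_lt h⟩ then i+1 else 0) else 0))
        + (∑ i ∈ Finset.range n, (if i + 1 = p then p else 0))
      = (∑ i ∈ Finset.range n, (if h : i + 1 < n then
          (if π ⟨i+1, h⟩ < π ⟨i, Nat.lt_of_succ_lt h⟩ then i+1 else 0) else 0))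
        + (∑ i ∈ Finset.range n, (if i = p then p + 1 else 0)) := by
      rw [← Finset.sum_add_distrib, ← Finset.sum_add_distrib]
      exact Finset.sum_congr rfl key
    rw [hsum_f, hsum_g] at h
    rw [hmaj σ, hmaj π]
    exact h
  omega

end SymMaj
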